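/- Let R be an associative ring with identity, let a, b ∈ C(R), and let g(x) ∈ C(R)[x] be a polynomial of the form g(x) = (x−a)(x−b)h(x) for some h(x) ∈ C(R)[x]. If R is strongly clean and b − a is a unit of R, then R is strongly g(x)-clean, i.e., every r ∈ R can be written as r = s + u where g(s) = 0, u is a unit of R, and su = us. -/

import Mathlib

/-- A ring is *strongly clean* if every element is the sum of an idempotent
and a unit that commute. -/
def StronglyClean (R : Type*) [Ring R] : Prop :=
  ∀ r : R, ∃ e u : R, e * e = e ∧ IsUnit u ∧ r = e + u ∧ e * u = u * e

/-- If `g(x) = (x−a)(x−b)h(x)` with `a, b` central and `h` having central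
coefficients, and `R` is strongly clean with `b − a` a unit, then `R` is
strongly `g(x)`-clean. -/
theorem strongly_gx_clean_of_stronglyClean (R : Type*) [Ring R] (a b : R)
    (ha : a ∈ Set.center R) (hb : b ∈ Set.center R)
    (h : Polynomial R) (hh : ∀ i, h.coeff i ∈ Set.center R)
    (g : Polynomial R) (hg : g = (Polynomial.X - Polynomial.C a) *
      (Polynomial.X - Polynomial.C b) * h)
    (hsc : StronglyClean R) (hba : IsUnit (b - a)) :
    ∀ r : R, ∃ s u : R, g.eval s = 0 ∧ IsUnit u ∧ r = s + u ∧ s * u = u * s := by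
  intro r
  have ca : ∀ x : R, a * x = x * a := fun x => (Set.mem_center_iff.mp ha).comm x
  have cb : ∀ x : R, b * x = x * b := fun x => (Set.mem_center_iff.mp hb).comm x
  have cd : ∀ x : R, (b - a) * x = x * (b - a) := fun x => by
    rw [sub_mul, mul_sub, ca, cb]
  -- inverse of b - a
  obtain ⟨d, hd⟩ := hba
  obtain ⟨e, u, he, hu, heu, hcomm⟩ := hsc (↑d⁻¹ * (r - a))
  set s : R := a + (b - a) * e with hs
  refine ⟨s, (b - a) * u, ?_, (IsUnit.mul (hd ▸ d.isUnit) hu), ?_, ?_⟩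
  · -- g.eval s = 0
    -- evaluate product
    have key : Polynomial.eval s g =
        (s - a) * ((s - b) * Polynomial.eval s h) := by
      have hXb : ∀ i, Commute ((Polynomial.X - Polynomial.C b).coeff i) s := by
        intro i
        rw [Polynomial.coeff_sub]
        refine Commute.sub_left ?_ ?_
        · rw [Polynomial.coeff_X]
          split <;> simp
        · rw [Polynomial.coeff_C]
          split
          · exact cb s
          · exact Commute.zero_left s
      have hcent : ∀ k, Commute (((Polynomial.X - Polynomial.C b) * h).coeff k) s := by
        intro k
        rw [Polynomial.coeff_mul]
        exact Commute.sum_left _ _ _ (fun i _ =>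
          Commute.mul_left (hXb i.1) ((Set.mem_center_iff.mp (hh i.2)).comm s))
      have hcenth : ∀ k, Commute (h.coeff k) s := fun k =>
        ((Set.mem_center_iff.mp (hh k)).comm s)
      rw [hg, mul_assoc]
      rw [show Polynomial.eval s = Polynomial.eval₂ (RingHom.id R) s from rfl]
      rw [Polynomial.eval₂_mul_noncomm _ _ hcent,
        Polynomial.eval₂_mul_noncomm _ _ (fun k => by simpa using hcenth k)]
      simp
    have hsa : s - a = (b - a) * e := by rw [hs, add_sub_cancel_left]
    have hsb : s - b = (b - a) * (e - 1) := by rw [hs, mul_sub, mul_one]; abel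
    rw [key, hsa, hsb]
    have : (b - a) * e * ((b - a) * (e - 1)) = 0 := by
      rw [Commute.mul_mul_mul_comm ((cd e).symm), mul_sub e e 1, he, mul_one, sub_self,
        mul_zero]
    rw [← mul_assoc, this, zero_mul]
  · -- r = s + (b - a) * u
    have : r - a = (b - a) * (e + u) := by
      have := congrArg (fun x => (b - a) * x) heu
      beta_reduce at this
      rw [← this, ← mul_assoc]
      have hdu : (b - a) * (↑d⁻¹ : R) = 1 := by
        rw [← hd]; exact_mod_cast Units.mul_inv d
      rw [hdu, one_mul]
    have := congrArg (fun x => a + x) this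
    beta_reduce at this
    rw [add_sub_cancel] at this
    rw [this, hs, mul_add, add_assoc]
  · -- commutation
    rw [hs]
    rw [add_mul, mul_add]
    congr 1
    · rw [ca]
    · rw [Commute.mul_mul_mul_comm ((cd e).symm), Commute.mul_mul_mul_comm ((cd u).symm),
        hcomm]
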